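/- Fix integers m ≥ 1 and α ≥ m, and let z > 0. Then the series ∑_{k ∈ ℤ^m} (k₁² + ⋯ + k_m² + z²)^{−α} converges absolutely, and lim_{n→∞} ∑_{k ∈ {0,…,n−1}^m} (ω(n,k) + z²)^{−α} = ∑_{k ∈ ℤ^m} (k₁² + ⋯ + k_m² + z²)^{−α}. -/

import Mathlib

open Real Filter Topology

/-! ### Auxiliary summability lemmas -/

private lemma aux_sum_sq_inv (c : ℝ) (hc : 0 < c) :
    Summable (fun k : ℤ => (((k : ℝ))^2 + c)⁻¹) := by
  have key : Summable (fun n : ℕ => (((n : ℝ))^2 + c)⁻¹) := by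
    have h2 : Summable (fun n : ℕ => (1 / ((n : ℝ) + 1) ^ 2)) := by
      have := (summable_nat_add_iff (f := fun n : ℕ => 1 / (n : ℝ) ^ 2) 1).2
        (summable_one_div_nat_pow.2 one_lt_two)
      simpa using this
    have hm : (0:ℝ) < min 1 c := lt_min one_pos hc
    apply Summable.of_nonneg_of_le (fun n => by positivity)
      (fun n => ?_) (h2.mul_left (2 / min 1 c))
    have h1 : min 1 c / 2 * ((n : ℝ) + 1)^2 ≤ (n : ℝ)^2 + c := by
      have hmc : min 1 c ≤ c := min_le_right _ _
      have hm1 : min 1 c ≤ 1 := min_le_left _ _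
      nlinarith [sq_nonneg ((n:ℝ) - 1), Nat.cast_nonneg (α := ℝ) n]
    calc ((n : ℝ)^2 + c)⁻¹ ≤ (min 1 c / 2 * ((n : ℝ) + 1)^2)⁻¹ :=
          inv_anti₀ (by positivity) h1
      _ = 2 / min 1 c * (1 / ((n:ℝ)+1)^2) := by
          have hne : ((n:ℝ)+1) ≠ 0 := by positivity
          field_simp
  apply Summable.of_nat_of_neg
  · simpa using key
  · simpa using key

private lemma aux_pi_prod (f : ℤ → ℝ) (hf : Summable f) (h0 : ∀ x, 0 ≤ f x) :
    ∀ m : ℕ, Summable (fun k : Fin m → ℤ => ∏ i, f (k i)) := by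
  intro m
  induction m with
  | zero => exact Summable.of_finite
  | succ n ih =>
    have h0' : 0 ≤ f := h0
    have h0'' : 0 ≤ (fun k : Fin n → ℤ => ∏ i, f (k i)) :=
      fun k => Finset.prod_nonneg fun i _ => h0 _
    have hmul := hf.mul_of_nonneg ih h0' h0''
    apply ((Fin.consEquiv (fun _ : Fin (n+1) => ℤ)).summable_iff
      (f := fun k : Fin (n+1) → ℤ => ∏ i, f (k i))).mp
    apply hmul.congr
    intro p
    simp [Fin.consEquiv, Fin.prod_univ_succ, Function.comp]


private lemma aux_g_summable (m α : ℕ) (hα : m ≤ α) (z : ℝ) (hz : 0 < z) :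
    Summable (fun k : Fin m → ℤ => ((∑ i : Fin m, ((k i : ℝ))^2) + z^2) ^ (-(α : ℤ))) := by
  have hprod := ((aux_pi_prod (fun x : ℤ => (((x:ℝ))^2 + z^2)⁻¹)
      (aux_sum_sq_inv _ (by positivity)) (fun x => by positivity)) m).mul_left (((z^2)^(α-m))⁻¹)
  apply Summable.of_nonneg_of_le (fun k => by positivity) (fun k => ?_) hprod
  set S := ∑ i : Fin m, ((k i:ℝ))^2 with hS
  have hS0 : 0 ≤ S := Finset.sum_nonneg fun i _ => sq_nonneg _
  have hb : (0:ℝ) < S + z^2 := by positivity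
  rw [zpow_neg, zpow_natCast]
  have h1 : ∏ i : Fin m, (((k i:ℝ))^2 + z^2) ≤ (S + z^2)^m := by
    calc ∏ i : Fin m, (((k i:ℝ))^2 + z^2)
        ≤ ∏ _i : Fin m, (S + z^2) := by
          apply Finset.prod_le_prod (fun i _ => by positivity) (fun i _ => ?_)
          have hle : ((k i:ℝ))^2 ≤ S :=
            Finset.single_le_sum (f := fun i => ((k i:ℝ))^2) (fun i _ => sq_nonneg _)
              (Finset.mem_univ i)
          linarith
      _ = (S + z^2)^m := by simp
  have h2 : (z^2)^(α - m) ≤ (S + z^2)^(α - m) :=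
    pow_le_pow_left₀ (by positivity) (by linarith) _
  have key : (∏ i : Fin m, (((k i:ℝ))^2 + z^2)) * (z^2)^(α-m) ≤ (S + z^2)^α := by
    calc (∏ i : Fin m, (((k i:ℝ))^2 + z^2)) * (z^2)^(α-m)
        ≤ (S+z^2)^m * (S+z^2)^(α-m) := by
          apply mul_le_mul h1 h2 (by positivity) (by positivity)
      _ = (S+z^2)^α := by rw [← pow_add]; congr 1; omega
  calc ((S+z^2)^α)⁻¹
      ≤ ((∏ i : Fin m, (((k i:ℝ))^2+z^2)) * (z^2)^(α-m))⁻¹ := by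
        apply inv_anti₀ (by positivity) key
    _ = ((z^2)^(α-m))⁻¹ * ∏ i : Fin m, (((k i:ℝ))^2+z^2)⁻¹ := by
        rw [mul_inv, ← Finset.prod_inv_distrib]; ring

private lemma aux_sin_lim (c : ℝ) :
    Tendsto (fun n : ℕ => (n:ℝ)/π * Real.sin (π * c / n)) atTop (𝓝 c) := by
  rcases eq_or_ne c 0 with rfl | hc
  · simpa [mul_zero, zero_div] using (tendsto_const_nhds :
      Tendsto (fun _ : ℕ => (0:ℝ)) atTop (𝓝 0))
  · have hslope : Tendsto (fun x : ℝ => Real.sin x / x) (𝓝[≠] (0:ℝ)) (𝓝 1) := by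
      have h := Real.hasDerivAt_sin 0
      rw [hasDerivAt_iff_tendsto_slope] at h
      simp only [Real.cos_zero] at h
      have heq : (fun x : ℝ => Real.sin x / x) = slope Real.sin 0 := by
        funext x
        simp [slope_fun_def, Real.sin_zero, div_eq_inv_mul]
      rw [heq]
      exact h
    have hu0 : Tendsto (fun n : ℕ => π * c / (n:ℝ)) atTop (𝓝 0) := by
      have h1 : Tendsto (fun n : ℕ => ((n:ℝ))⁻¹) atTop (𝓝 0) :=
        (tendsto_natCast_atTop_atTop (R := ℝ)).inv_tendsto_atTop
      have := h1.const_mul (π * c)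
      simpa [div_eq_mul_inv] using this
    have hu : Tendsto (fun n : ℕ => π * c / (n:ℝ)) atTop (𝓝[≠] (0:ℝ)) := by
      rw [tendsto_nhdsWithin_iff]
      refine ⟨hu0, ?_⟩
      filter_upwards [eventually_ge_atTop 1] with n hn
      have hn0 : (n:ℝ) ≠ 0 := Nat.cast_ne_zero.2 (by omega)
      exact div_ne_zero (mul_ne_zero Real.pi_ne_zero hc) hn0
    have h2 : Tendsto (fun n : ℕ => c * (Real.sin (π*c/(n:ℝ)) / (π*c/(n:ℝ)))) atTop (𝓝 c) := by
      have := (hslope.comp hu).const_mul c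
      simpa using this
    refine h2.congr' ?_
    filter_upwards [eventually_ge_atTop 1] with n hn
    have hn0 : (n:ℝ) ≠ 0 := Nat.cast_ne_zero.2 (by omega)
    field_simp

private lemma aux_T_lim (m α : ℕ) (z : ℝ) (hz : 0 < z) (j : Fin m → ℤ) :
    Tendsto (fun n : ℕ =>
        ((n:ℝ)^2/π^2 * (∑ i : Fin m, Real.sin (π * ((j i : ℤ):ℝ)/(n:ℝ))^2) + z^2) ^ (-(α:ℤ)))
      atTop (𝓝 (((∑ i : Fin m, (((j i : ℤ):ℝ))^2) + z^2) ^ (-(α:ℤ)))) := by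
  have hbase : Tendsto (fun n : ℕ => (n:ℝ)^2/π^2 * (∑ i : Fin m, Real.sin (π * ((j i:ℤ):ℝ)/(n:ℝ))^2))
      atTop (𝓝 (∑ i : Fin m, (((j i:ℤ):ℝ))^2)) := by
    have h1 : ∀ i : Fin m, Tendsto (fun n : ℕ => ((n:ℝ)/π * Real.sin (π * ((j i:ℤ):ℝ)/(n:ℝ)))^2)
        atTop (𝓝 ((((j i:ℤ):ℝ))^2)) := fun i => (aux_sin_lim _).pow 2
    have hsum := tendsto_finset_sum Finset.univ (fun i (_ : i ∈ Finset.univ) => h1 i)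
    refine hsum.congr (fun n => ?_)
    rw [Finset.mul_sum]
    refine Finset.sum_congr rfl (fun i _ => ?_)
    rw [mul_pow, div_pow]
  have hne : (∑ i : Fin m, (((j i:ℤ):ℝ))^2) + z^2 ≠ 0 := by positivity
  simp only [zpow_neg, zpow_natCast]
  exact ((hbase.add_const (z^2)).pow α).inv₀ (pow_ne_zero _ hne)


private noncomputable def auxBox (m n : ℕ) : Finset (Fin m → ℤ) :=
  Fintype.piFinset (fun _ => Finset.Ioc ((n:ℤ)/2 - n) ((n:ℤ)/2))

private noncomputable def auxT (m α : ℕ) (z : ℝ) (n : ℕ) (j : Fin m → ℤ) : ℝ :=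
  ((n:ℝ)^2/π^2 * (∑ i : Fin m, Real.sin (π * ((j i : ℤ):ℝ)/(n:ℝ))^2) + z^2) ^ (-(α:ℤ))

private noncomputable def auxF (m α : ℕ) (z : ℝ) (n : ℕ) (j : Fin m → ℤ) : ℝ :=
  if j ∈ auxBox m n then auxT m α z n j else 0

private lemma aux_mem_box {m n : ℕ} {v : Fin m → ℤ} :
    v ∈ auxBox m n ↔ ∀ idx, (n:ℤ)/2 - n < v idx ∧ v idx ≤ (n:ℤ)/2 := by
  simp [auxBox, Fintype.mem_piFinset, Finset.mem_Ioc]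

private lemma aux_zpow_le {a b : ℝ} (α : ℕ) (ha : 0 < a) (hab : a ≤ b) :
    b ^ (-(α:ℤ)) ≤ a ^ (-(α:ℤ)) := by
  rw [zpow_neg, zpow_neg, zpow_natCast, zpow_natCast]
  exact inv_anti₀ (pow_pos ha _) (pow_le_pow_left₀ ha.le hab _)

-- single coordinate sine bound
private lemma aux_sin_bound {n : ℕ} {a : ℝ} (hn : 0 < n) (ha : 2 * |a| ≤ (n:ℝ)) :
    (2/π)^2 * a^2 ≤ (n:ℝ)^2/π^2 * Real.sin (π * a / (n:ℝ))^2 := by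
  have hπ : (0:ℝ) < π := Real.pi_pos
  have hn0 : (0:ℝ) < (n:ℝ) := by exact_mod_cast hn
  set x := π * a / (n:ℝ) with hx
  have hxabs : |x| = π * |a| / (n:ℝ) := by
    rw [hx, abs_div, abs_mul, abs_of_pos hπ, abs_of_pos hn0]
  have hx2 : |x| ≤ π / 2 := by
    rw [hxabs, div_le_div_iff₀ hn0 two_pos]
    nlinarith [abs_nonneg a]
  have h1 : 2/π * |x| ≤ Real.sin |x| := Real.mul_le_sin (abs_nonneg x) hx2
  have h2 : Real.sin |x| ^ 2 = Real.sin x ^ 2 := by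
    rcases abs_cases x with ⟨h, _⟩ | ⟨h, _⟩ <;> rw [h] <;> simp [Real.sin_neg]
  have h3 : (2/π * |x|)^2 ≤ Real.sin x ^ 2 := by
    calc (2/π * |x|)^2 ≤ Real.sin |x| ^ 2 := by
          apply pow_le_pow_left₀ (by positivity) h1
      _ = Real.sin x ^ 2 := h2
  have h4 : (2/π * |x|)^2 = (2/π)^2 * x^2 := by
    rw [mul_pow, sq_abs]
  have h5 : x^2 = π^2 * a^2 / (n:ℝ)^2 := by
    rw [hx]
    field_simp
  have h6 : (n:ℝ)^2/π^2 * ((2/π)^2 * x^2) = (2/π)^2 * a^2 := by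
    rw [h5]
    field_simp
  calc (2/π)^2 * a^2 = (n:ℝ)^2/π^2 * ((2/π)^2 * x^2) := h6.symm
    _ ≤ (n:ℝ)^2/π^2 * Real.sin x ^ 2 := by
        apply mul_le_mul_of_nonneg_left (h4 ▸ h3) (by positivity)

private lemma aux_bound (m α : ℕ) (z : ℝ) (hz : 0 < z) (n : ℕ) (j : Fin m → ℤ) :
    ‖auxF m α z n j‖ ≤ ((2/π)^2 * (∑ i : Fin m, (((j i:ℤ):ℝ))^2) + z^2) ^ (-(α:ℤ)) := by
  have hS0 : (0:ℝ) ≤ ∑ i : Fin m, (((j i:ℤ):ℝ))^2 :=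
    Finset.sum_nonneg fun i _ => sq_nonneg _
  have hGpos : (0:ℝ) < (2/π)^2 * (∑ i : Fin m, (((j i:ℤ):ℝ))^2) + z^2 := by positivity
  unfold auxF
  split_ifs with hmem
  · rw [aux_mem_box] at hmem
    rcases Nat.eq_zero_or_pos n with rfl | hn
    · -- n = 0 forces m = 0
      obtain rfl : m = 0 := by
        rcases Nat.eq_zero_or_pos m with rfl | hm
        · rfl
        · have := hmem ⟨0, hm⟩
          omega
      have hzz : (0:ℝ) < z^2 := by positivity
      simp only [auxT, Finset.univ_eq_empty, Finset.sum_empty, mul_zero, zero_add,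
        Real.norm_eq_abs]
      rw [abs_of_pos (zpow_pos hzz _)]
    · have hbase : (0:ℝ) < (n:ℝ)^2/π^2 * (∑ i : Fin m, Real.sin (π * ((j i:ℤ):ℝ)/(n:ℝ))^2) + z^2 := by
        have h1 : (0:ℝ) ≤ ∑ i : Fin m, Real.sin (π * ((j i:ℤ):ℝ)/(n:ℝ))^2 :=
          Finset.sum_nonneg fun i _ => sq_nonneg _
        have h2 : (0:ℝ) ≤ (n:ℝ)^2/π^2 := by positivity
        nlinarith
      have hTnn : (0:ℝ) ≤ auxT m α z n j := by
        unfold auxT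
        exact (zpow_pos hbase _).le
      rw [Real.norm_eq_abs, abs_of_nonneg hTnn]
      unfold auxT
      apply aux_zpow_le α hGpos
      apply (add_le_add_iff_right _).mpr
      rw [Finset.mul_sum, Finset.mul_sum]
      apply Finset.sum_le_sum
      intro idx _
      apply aux_sin_bound hn
      have h2 : (2:ℤ) * |j idx| ≤ (n:ℤ) := by
        have := hmem idx
        rcases abs_cases (j idx) with ⟨he, _⟩ | ⟨he, _⟩ <;> omega
      calc 2 * |((j idx : ℤ):ℝ)| = (((2 * |j idx| : ℤ) : ℤ):ℝ) := by push_cast; ring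
        _ ≤ (n:ℝ) := by exact_mod_cast h2
  · simp only [norm_zero]
    positivity

private lemma aux_sum_eq (m α : ℕ) (z : ℝ) (n : ℕ) :
    ∑ k ∈ Fintype.piFinset (fun _ : Fin m => Finset.range n),
      ((n : ℝ)^2 / π^2 * (∑ i : Fin m, Real.sin (π * (k i : ℝ) / (n : ℝ))^2) + z^2) ^ (-(α : ℤ))
      = ∑' j : Fin m → ℤ, auxF m α z n j := by
  rw [tsum_eq_sum (s := auxBox m n) (f := fun j => auxF m α z n j)
    (fun b hb => by simp [auxF, hb])]
  rw [Finset.sum_congr rfl (fun j hj => show auxF m α z n j = auxT m α z n j by simp [auxF, hj])]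
  apply Finset.sum_nbij'
    (i := fun (k : Fin m → ℕ) (idx : Fin m) =>
      if (k idx : ℤ) ≤ (n:ℤ)/2 then (k idx : ℤ) else (k idx : ℤ) - n)
    (j := fun (v : Fin m → ℤ) (idx : Fin m) =>
      if 0 ≤ v idx then (v idx).toNat else (v idx + n).toNat)
  · -- forward membership
    intro k hk
    rw [Fintype.mem_piFinset] at hk
    rw [aux_mem_box]
    intro idx
    have h1 := hk idx
    rw [Finset.mem_range] at h1
    constructor <;> [skip; skip] <;> split_ifs with h <;> omega
  · -- backward membership
    intro v hv
    rw [aux_mem_box] at hv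
    rw [Fintype.mem_piFinset]
    intro idx
    have h1 := hv idx
    rw [Finset.mem_range]
    split_ifs with h <;> omega
  · -- left inverse
    intro k hk
    rw [Fintype.mem_piFinset] at hk
    funext idx
    have h1 := hk idx
    rw [Finset.mem_range] at h1
    beta_reduce
    split_ifs with h h2 h3 <;> omega
  · -- right inverse
    intro v hv
    rw [aux_mem_box] at hv
    funext idx
    have h1 := hv idx
    beta_reduce
    split_ifs with h h2 h3 <;> omega
  · -- value equality
    intro k hk
    rw [Fintype.mem_piFinset] at hk
    unfold auxT
    congr 2
    congr 1
    apply Finset.sum_congr rfl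
    intro idx _
    have h1 := hk idx
    rw [Finset.mem_range] at h1
    have hn0 : (n:ℝ) ≠ 0 := Nat.cast_ne_zero.2 (by omega)
    beta_reduce
    split_ifs with h
    · norm_num
    · push_cast
      have harg : π * ((k idx : ℝ) - (n:ℝ)) / (n:ℝ) = π * (k idx : ℝ) / (n:ℝ) - π := by
        field_simp
      rw [harg, Real.sin_sub_pi, neg_sq]


private lemma aux_G_summable (m α : ℕ) (hα : m ≤ α) (z : ℝ) (hz : 0 < z) :
    Summable (fun j : Fin m → ℤ =>
      ((2/π)^2 * (∑ i : Fin m, (((j i:ℤ):ℝ))^2) + z^2) ^ (-(α:ℤ))) := by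
  have hg := (aux_g_summable m α hα z hz).mul_left ((π/2)^(2*α))
  apply Summable.of_nonneg_of_le (fun j => ?_) (fun j => ?_) hg
  · have : (0:ℝ) < (2/π)^2 * (∑ i : Fin m, (((j i:ℤ):ℝ))^2) + z^2 := by
      have : (0:ℝ) ≤ ∑ i : Fin m, (((j i:ℤ):ℝ))^2 := Finset.sum_nonneg fun i _ => sq_nonneg _
      positivity
    exact (zpow_pos this _).le
  · set S := ∑ i : Fin m, (((j i:ℤ):ℝ))^2 with hS
    have hS0 : (0:ℝ) ≤ S := Finset.sum_nonneg fun i _ => sq_nonneg _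
    have hπ : (0:ℝ) < π := Real.pi_pos
    have hc0 : (0:ℝ) < (2/π)^2 := by positivity
    have hc1 : ((2:ℝ)/π)^2 ≤ 1 := by
      rw [div_pow]
      rw [div_le_one (by positivity)]
      nlinarith [Real.pi_gt_three]
    have step1 : ((2/π)^2 * S + z^2) ^ (-(α:ℤ)) ≤ ((2/π)^2 * (S + z^2)) ^ (-(α:ℤ)) := by
      apply aux_zpow_le α (by positivity)
      nlinarith
    have step2 : (((2/π)^2 : ℝ) * (S + z^2)) ^ (-(α:ℤ))
        = (π/2)^(2*α) * (S + z^2) ^ (-(α:ℤ)) := by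
      rw [mul_zpow]
      congr 1
      rw [zpow_neg, zpow_natCast, ← pow_mul, ← inv_pow, inv_div]
    calc ((2/π)^2 * S + z^2) ^ (-(α:ℤ)) ≤ ((2/π)^2 * (S + z^2)) ^ (-(α:ℤ)) := step1
      _ = (π/2)^(2*α) * (S + z^2) ^ (-(α:ℤ)) := step2

private lemma aux_eventually (m α : ℕ) (z : ℝ) (j : Fin m → ℤ) :
    ∀ᶠ n : ℕ in atTop, auxF m α z n j = auxT m α z n j := by
  set s : ℕ := Finset.univ.sup (fun i => (j i).natAbs) with hs
  filter_upwards [eventually_ge_atTop (2*s+2)] with n hn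
  have hjb : j ∈ auxBox m n := by
    rw [aux_mem_box]
    intro idx
    have hi : (j idx).natAbs ≤ s := Finset.le_sup (f := fun i => (j i).natAbs) (Finset.mem_univ idx)
    omega
  simp [auxF, hjb]


/-- for integers `m ≥ 1`, `α ≥ m` and `z > 0`, the series
`∑_{k ∈ ℤ^m} (k₁²+⋯+k_m²+z²)^{−α}` converges absolutely, and the resolvent power traces
of the discrete torus Laplacians, `∑_{k ∈ {0,…,n−1}^m} (ω(n,k)+z²)^{−α}` with
`ω(n,k) = (n²/π²)·∑ᵢ sin²(π kᵢ/n)`, converge to it as `n → ∞`. -/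
theorem stmt_3 (m α : ℕ) (hm : 1 ≤ m) (hα : m ≤ α) (z : ℝ) (hz : 0 < z) :
    Summable (fun k : Fin m → ℤ => ((∑ i : Fin m, ((k i : ℝ))^2) + z^2) ^ (-(α : ℤ))) ∧
    Tendsto (fun n : ℕ =>
        ∑ k ∈ Fintype.piFinset (fun _ : Fin m => Finset.range n),
          ((n : ℝ)^2 / π^2 * (∑ i : Fin m, Real.sin (π * (k i : ℝ) / (n : ℝ))^2) + z^2)
            ^ (-(α : ℤ)))
      atTop
      (nhds (∑' k : Fin m → ℤ, ((∑ i : Fin m, ((k i : ℝ))^2) + z^2) ^ (-(α : ℤ)))) := by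
  refine ⟨aux_g_summable m α hα z hz, ?_⟩
  have h := tendsto_tsum_of_dominated_convergence
    (𝓕 := (atTop : Filter ℕ))
    (f := fun n (j : Fin m → ℤ) => auxF m α z n j)
    (g := fun j : Fin m → ℤ => ((∑ i : Fin m, (((j i:ℤ):ℝ))^2) + z^2) ^ (-(α:ℤ)))
    (bound := fun j : Fin m → ℤ => ((2/π)^2 * (∑ i : Fin m, (((j i:ℤ):ℝ))^2) + z^2) ^ (-(α:ℤ)))
    (aux_G_summable m α hα z hz)
    (fun j => (aux_T_lim m α z hz j).congr' ((aux_eventually m α z j).mono fun n h => h.symm))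
    (Eventually.of_forall (fun n j => aux_bound m α z hz n j))
  exact h.congr (fun n => (aux_sum_eq m α z n).symm)
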